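/- For a nontrivial ring R and a preorder θ on Fin n, the structural matrix ring M_n(θ,R) is a permutation conjugate of the ring of upper triangular matrices if and only if θ is a linear order. -/

import Mathlib

open Matrix

lemma conj_set_eq (R : Type*) [Ring R] (n : ℕ) (σ : Equiv.Perm (Fin n)) :
    {B : Matrix (Fin n) (Fin n) R |
        ∃ A ∈ {A : Matrix (Fin n) (Fin n) R | ∀ i j, A i j ≠ 0 → i ≤ j},
          B = σ.permMatrix R * A * (σ⁻¹).permMatrix R} =
      {B : Matrix (Fin n) (Fin n) R | ∀ i j, B i j ≠ 0 → σ i ≤ σ j} := by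
  have key : ∀ A : Matrix (Fin n) (Fin n) R,
      σ.permMatrix R * A * (σ⁻¹).permMatrix R = A.submatrix σ σ := by
    intro A
    rw [Equiv.Perm.permMatrix, Equiv.Perm.permMatrix, PEquiv.toMatrix_toPEquiv_mul,
      PEquiv.mul_toMatrix_toPEquiv]
    have h : ⇑(Equiv.symm σ⁻¹) = ⇑σ := by ext x; rfl
    rw [h]
    ext i j
    simp
  ext B
  constructor
  · rintro ⟨A, hA, rfl⟩ i j h
    rw [key] at h
    exact hA _ _ h
  · intro hB
    refine ⟨B.submatrix σ.symm σ.symm, fun i j h => ?_, ?_⟩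
    · have := hB _ _ h
      simpa using this
    · rw [key]
      ext i j
      simp

lemma std_mem_iff (R : Type*) [Ring R] [Nontrivial R] {n : ℕ}
    (ρ : Fin n → Fin n → Prop) (i j : Fin n) :
    (∀ a b, Matrix.single i j (1 : R) a b ≠ 0 → ρ a b) ↔ ρ i j := by
  constructor
  · intro h
    apply h i j
    simp [Matrix.single]
  · intro h a b hab
    by_contra hρ
    apply hab
    rw [Matrix.single]
    by_cases h1 : i = a ∧ j = b
    · exact absurd (h1.1 ▸ h1.2 ▸ h) hρ
    · simp only [of_apply]
      rw [if_neg h1]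

theorem structural_matrix_ring_linear_iff_conjugate_upper
    (R : Type*) [Ring R] [Nontrivial R] (n : ℕ)
    (θ : Fin n → Fin n → Prop) (hr : Reflexive θ) (ht : Transitive θ) :
    ((∀ i j, θ i j → θ j i → i = j) ∧ (∀ i j, θ i j ∨ θ j i)) ↔
      ∃ σ : Equiv.Perm (Fin n),
        {A : Matrix (Fin n) (Fin n) R | ∀ i j, A i j ≠ 0 → θ i j} =
          {B : Matrix (Fin n) (Fin n) R |
            ∃ A ∈ {A : Matrix (Fin n) (Fin n) R | ∀ i j, A i j ≠ 0 → i ≤ j},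
              B = σ.permMatrix R * A * (σ⁻¹).permMatrix R} := by
  constructor
  · rintro ⟨hanti, htot⟩
    -- build a linear order from θ
    let myPre : Preorder (Fin n) :=
      { le := θ
        le_refl := hr
        le_trans := fun a b c hab hbc => ht hab hbc
        lt := fun a b => θ a b ∧ ¬ θ b a
        lt_iff_le_not_ge := fun a b => Iff.rfl }
    let myPO : PartialOrder (Fin n) := { toPreorder := myPre, le_antisymm := hanti }
    classical
    let dLE : ∀ a b : Fin n, Decidable (θ a b) := fun _ _ => Classical.dec _
    let myOrd : LinearOrder (Fin n) :=
      { toPartialOrder := myPO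
        le_total := htot
        toDecidableLE := dLE
        toDecidableEq := @decidableEqOfDecidableLE _ myPO dLE
        toDecidableLT := @decidableLTOfDecidableLE _ myPO.toPreorder dLE
        min := fun a b => @ite _ (θ a b) (dLE a b) a b
        max := fun a b => @ite _ (θ a b) (dLE a b) b a
        min_def := fun a b => rfl
        max_def := fun a b => rfl
        compare := fun a b =>
          @compareOfLessAndEq _ a b myPO.toPreorder.toLT
            (@decidableLTOfDecidableLE _ myPO.toPreorder dLE a b)
            (@decidableEqOfDecidableLE _ myPO dLE)
        compare_eq_compareOfLessAndEq := fun a b => rfl }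
    let e := @monoEquivOfFin (Fin n) _ myOrd n (Fintype.card_fin n)
    refine ⟨e.toEquiv.symm, ?_⟩
    rw [conj_set_eq]
    have hiff : ∀ i j, θ i j ↔ e.toEquiv.symm i ≤ e.toEquiv.symm j := by
      intro i j
      have h2 : θ (e.toEquiv (e.toEquiv.symm i)) (e.toEquiv (e.toEquiv.symm j)) ↔
          e.toEquiv.symm i ≤ e.toEquiv.symm j := e.map_rel_iff
      rwa [Equiv.apply_symm_apply, Equiv.apply_symm_apply] at h2
    ext B
    simp only [Set.mem_setOf_eq]
    exact ⟨fun h i j hij => (hiff i j).mp (h i j hij),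
           fun h i j hij => (hiff i j).mpr (h i j hij)⟩
  · rintro ⟨σ, hσ⟩
    rw [conj_set_eq] at hσ
    have hiff : ∀ i j, θ i j ↔ σ i ≤ σ j := by
      intro i j
      have h1 := Set.ext_iff.mp hσ (Matrix.single i j (1 : R))
      simp only [Set.mem_setOf_eq] at h1
      rw [std_mem_iff R θ i j, std_mem_iff R (fun a b => σ a ≤ σ b) i j] at h1
      exact h1
    constructor
    · intro i j h1 h2
      have := le_antisymm ((hiff i j).mp h1) ((hiff j i).mp h2)
      exact σ.injective this
    · intro i j
      rcases le_total (σ i) (σ j) with h | h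
      · exact Or.inl ((hiff i j).mpr h)
      · exact Or.inr ((hiff j i).mpr h)
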